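/- arXiv:2307.06313 — 4 statements merged into one kernel-verified Lean document; each statement's English description precedes it below -/
import Mathlib

section
/- Let p > 3 be a prime with p ≡ 3 (mod 4). Then ∑_{m=0}^{p-1} (∑_{a=0}^{p-1} e(ma⁴/p))² · (∑_{b=0}^{p-1} e(-mb⁴/p))² = p⁴ + p³ - p². -/
open Finset

/-- `e y = e^{2πiy}`. -/
noncomputable def e (x : ℝ) : ℂ := Complex.exp (2 * Real.pi * x * Complex.I)

lemma e_add (x y : ℝ) : e (x + y) = e x * e y := by
  rw [e, e, e, ← Complex.exp_add]
  push_cast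
  ring_nf

lemma e_int (n : ℤ) : e n = 1 := by
  have h := Complex.exp_int_mul_two_pi_mul_I n
  rw [e, ← h]
  push_cast
  ring_nf

lemma e_add_int (x : ℝ) (n : ℤ) : e (x + n) = e x := by
  rw [e_add, e_int, mul_one]

lemma e_zero : e 0 = 1 := by
  simpa using e_int 0

noncomputable def psi (p : ℕ) (x : ZMod p) : ℂ := e (x.val / p)

lemma e_nat (p : ℕ) [NeZero p] (n : ℕ) : e (n / p) = psi p (n : ZMod p) := by
  have hp0 : (p : ℝ) ≠ 0 := Nat.cast_ne_zero.mpr (NeZero.ne p)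
  have key : (n : ℝ) = (n % p : ℕ) + (n / p : ℕ) * p := by
    exact_mod_cast (Nat.mod_add_div' n p).symm
  have h1 : (n : ℝ) / p = ((n % p : ℕ) : ℝ) / p + ((n / p : ℕ) : ℤ) := by
    rw [key, add_div, mul_div_assoc, div_self hp0, mul_one, Int.cast_natCast]
  rw [h1, e_add_int, psi, ZMod.val_natCast]

lemma e_neg_nat (p : ℕ) [NeZero p] (n : ℕ) :
    e (-(n : ℝ) / p) = psi p (-(n : ZMod p)) := by
  have hp0 : (p : ℝ) ≠ 0 := Nat.cast_ne_zero.mpr (NeZero.ne p)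
  set y := (-(n : ZMod p)).val with hy
  have hdvd : p ∣ y + n := by
    rw [← ZMod.natCast_eq_zero_iff]
    push_cast
    rw [hy, ZMod.natCast_val, ZMod.cast_id]
    ring
  obtain ⟨k, hk⟩ := hdvd
  have hkr : (y : ℝ) + n = p * k := by exact_mod_cast hk
  have h1 : (y : ℝ) / p = -(n : ℝ) / p + ((k : ℤ) : ℝ) := by
    field_simp
    push_cast
    linarith
  rw [psi, ← hy, h1, e_add_int]

lemma psi_add (p : ℕ) [NeZero p] (x y : ZMod p) :
    psi p (x + y) = psi p x * psi p y := by
  have h1 : psi p x * psi p y = e ((x.val + y.val : ℕ) / p) := by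
    rw [psi, psi, ← e_add]
    push_cast
    ring_nf
  rw [h1, e_nat p]
  congr 1
  push_cast
  rw [ZMod.natCast_val, ZMod.natCast_val, ZMod.cast_id, ZMod.cast_id]

lemma psi_zero (p : ℕ) [NeZero p] : psi p 0 = 1 := by
  rw [psi, ZMod.val_zero]
  simpa using e_zero

lemma sum_zmod (p : ℕ) [NeZero p] (f : ZMod p → ℂ) :
    ∑ i ∈ range p, f (i : ZMod p) = ∑ x : ZMod p, f x := by
  refine Finset.sum_nbij' (fun i => (i : ZMod p)) (fun x => x.val) ?_ ?_ ?_ ?_ ?_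
  · intro a _; exact Finset.mem_univ _
  · intro x _; exact Finset.mem_range.mpr (ZMod.val_lt x)
  · intro a ha
    show ((a : ZMod p)).val = a
    rw [ZMod.val_natCast, Nat.mod_eq_of_lt (Finset.mem_range.mp ha)]
  · intro x _
    show ((x.val : ℕ) : ZMod p) = x
    exact ZMod.natCast_zmod_val x
  · intro a _; rfl

lemma e_pow (z : ℝ) (k : ℕ) : e ((k : ℝ) * z) = e z ^ k := by
  induction k with
  | zero => simpa using e_zero
  | succ k ih =>
    have h : ((k + 1 : ℕ) : ℝ) * z = (k : ℝ) * z + z := by push_cast; ring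
    rw [h, e_add, ih, pow_succ]

lemma sum_psi (p : ℕ) [NeZero p] (hp : p.Prime) : ∑ x : ZMod p, psi p x = 0 := by
  have hppos : (0 : ℝ) < p := by exact_mod_cast hp.pos
  set z := e (1 / p) with hz
  have hterm : ∀ i ∈ range p, psi p ((i : ZMod p)) = z ^ i := by
    intro i _
    rw [← e_nat p i, hz, ← e_pow]
    congr 1
    ring
  have hsum : ∑ x : ZMod p, psi p x = ∑ i ∈ range p, z ^ i := by
    rw [← sum_zmod p (psi p)]
    exact Finset.sum_congr rfl hterm
  have hzp : z ^ p = 1 := by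
    rw [hz, ← e_pow]
    have h : (p : ℝ) * (1 / p) = ((1 : ℤ) : ℝ) := by field_simp; norm_num
    rw [h, e_int]
  have hz1 : z ≠ 1 := by
    intro h
    rw [hz, e, Complex.exp_eq_one_iff] at h
    obtain ⟨n, hn⟩ := h
    have h2pi : (2 * (Real.pi : ℂ) * Complex.I) ≠ 0 := by
      simp [Real.pi_ne_zero, Complex.I_ne_zero]
    have hc : ((1 / p : ℝ) : ℂ) = (n : ℂ) :=
      mul_left_cancel₀ h2pi (by linear_combination hn)
    have hreal : (1 / p : ℝ) = (n : ℝ) := by exact_mod_cast hc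
    have hpos : 0 < 1 / (p : ℝ) := one_div_pos.mpr hppos
    have hlt : 1 / (p : ℝ) < 1 := by
      rw [div_lt_one hppos]
      exact_mod_cast hp.one_lt
    rw [hreal] at hpos hlt
    have h1 : (0 : ℤ) < n := by exact_mod_cast hpos
    have h2 : (n : ℝ) ≥ 1 := by exact_mod_cast h1
    linarith
  rw [hsum, geom_sum_eq hz1, hzp]
  simp

lemma sum_psi_mul (p : ℕ) [NeZero p] (hp : p.Prime) (c : ZMod p) :
    ∑ x : ZMod p, psi p (c * x) = if c = 0 then (p : ℂ) else 0 := by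
  haveI : Fact p.Prime := ⟨hp⟩
  by_cases hc : c = 0
  · simp only [hc, if_pos, zero_mul]
    rw [Finset.sum_const, psi_zero p]
    simp [ZMod.card]
  · rw [if_neg hc]
    have h := Equiv.sum_comp (Equiv.mulLeft₀ c hc) (psi p)
    simp only [Equiv.mulLeft₀_apply] at h
    rw [← sum_psi p hp, ← h]

lemma sum_pow4 (p : ℕ) [NeZero p] (hp : p.Prime) (h4 : p % 4 = 3) (f : ZMod p → ℂ) :
    ∑ a : ZMod p, f (a ^ 4) = ∑ a : ZMod p, f (a ^ 2) := by
  haveI : Fact p.Prime := ⟨hp⟩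
  have hp3 : 3 ≤ p := by omega
  set k := 2 + (p - 1) / 2 with hk
  have h2k : 2 * k = 4 + (p - 1) := by omega
  have hk0 : k ≠ 0 := by omega
  have hco : Nat.Coprime k (p - 1) := by
    obtain ⟨t, ht⟩ : ∃ t, p = 4 * t + 3 := ⟨p / 4, by omega⟩
    have hk' : k = 2 * t + 3 := by omega
    have hp1 : p - 1 = 2 * (2 * t + 1) := by omega
    rw [hk', hp1]
    refine Nat.Coprime.mul_right ?_ ?_
    · exact Nat.coprime_two_right.mpr (Nat.odd_iff.mpr (by omega))
    · rw [Nat.coprime_comm, show 2 * t + 3 = 2 + (2 * t + 1) from by ring,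
        Nat.coprime_add_self_right]
      exact Nat.coprime_two_right.mpr (Nat.odd_iff.mpr (by omega))
  have hinj : Function.Injective (fun a : ZMod p => a ^ k) := by
    intro a b hab
    simp only at hab
    by_cases ha : a = 0
    · subst ha
      rw [zero_pow hk0] at hab
      exact ((pow_eq_zero_iff hk0).mp hab.symm).symm
    by_cases hb : b = 0
    · subst hb
      rw [zero_pow hk0] at hab
      exact absurd ((pow_eq_zero_iff hk0).mp hab) ha
    have hu : (a * b⁻¹) ^ k = 1 := by
      rw [mul_pow, inv_pow, hab, mul_inv_cancel₀ (pow_ne_zero k hb)]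
    have hu0 : a * b⁻¹ ≠ 0 := mul_ne_zero ha (inv_ne_zero hb)
    have h1 : orderOf (a * b⁻¹) ∣ k := orderOf_dvd_of_pow_eq_one hu
    have h2 : orderOf (a * b⁻¹) ∣ p - 1 :=
      orderOf_dvd_of_pow_eq_one (ZMod.pow_card_sub_one_eq_one hu0)
    have hdvd1 : orderOf (a * b⁻¹) ∣ 1 := hco ▸ Nat.dvd_gcd h1 h2
    have hone : a * b⁻¹ = 1 := orderOf_eq_one_iff.mp (Nat.dvd_one.mp hdvd1)
    field_simp at hone
    exact hone
  have hbij : Function.Bijective (fun a : ZMod p => a ^ k) :=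
    Finite.injective_iff_bijective.mp hinj
  have hpow : ∀ a : ZMod p, (a ^ k) ^ 2 = a ^ 4 := by
    intro a
    rw [← pow_mul, mul_comm k 2, h2k]
    by_cases ha : a = 0
    · subst ha; rw [zero_pow (by omega), zero_pow (by omega)]
    · rw [pow_add, ZMod.pow_card_sub_one_eq_one ha, mul_one]
  calc ∑ a : ZMod p, f (a ^ 4) = ∑ a : ZMod p, f ((a ^ k) ^ 2) :=
        Finset.sum_congr rfl fun a _ => by rw [hpow]
    _ = ∑ a : ZMod p, f (a ^ 2) :=
        Fintype.sum_bijective _ hbij _ _ (fun a => rfl)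

lemma key_prod (p : ℕ) [NeZero p] (hp : p.Prime) (h3 : 3 < p) (m : ZMod p) :
    (∑ a : ZMod p, psi p (m * a ^ 2)) * (∑ b : ZMod p, psi p (-(m * b ^ 2))) =
      if m = 0 then (p : ℂ) ^ 2 else (p : ℂ) := by
  haveI : Fact p.Prime := ⟨hp⟩
  have h2 : (2 : ZMod p) ≠ 0 := by
    intro h
    have h' : ((2 : ℕ) : ZMod p) = 0 := by exact_mod_cast h
    have := Nat.le_of_dvd (by norm_num)
      ((ZMod.natCast_eq_zero_iff 2 p).mp h')
    omega
  have step1 : (∑ a : ZMod p, psi p (m * a ^ 2)) * (∑ b : ZMod p, psi p (-(m * b ^ 2)))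
      = ∑ z : ZMod p × ZMod p, psi p (m * (z.1 ^ 2 - z.2 ^ 2)) := by
    rw [Finset.sum_mul_sum, ← Finset.sum_product', Finset.univ_product_univ]
    refine Fintype.sum_congr _ _ fun z => ?_
    rw [← psi_add p]
    congr 1
    ring
  let ε : (ZMod p × ZMod p) ≃ (ZMod p × ZMod p) :=
    { toFun := fun z => (z.1 + z.2, z.1 - z.2)
      invFun := fun w => ((w.1 + w.2) / 2, (w.1 - w.2) / 2)
      left_inv := fun z => by
        ext
        · show (z.1 + z.2 + (z.1 - z.2)) / 2 = z.1
          field_simp; ring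
        · show (z.1 + z.2 - (z.1 - z.2)) / 2 = z.2
          field_simp; ring
      right_inv := fun w => by
        ext
        · show (w.1 + w.2) / 2 + (w.1 - w.2) / 2 = w.1
          field_simp; ring
        · show (w.1 + w.2) / 2 - (w.1 - w.2) / 2 = w.2
          field_simp; ring }
  have step2 : ∑ z : ZMod p × ZMod p, psi p (m * (z.1 ^ 2 - z.2 ^ 2))
      = ∑ w : ZMod p × ZMod p, psi p (m * (w.1 * w.2)) := by
    rw [← Equiv.sum_comp ε (fun w => psi p (m * (w.1 * w.2)))]
    refine Fintype.sum_congr _ _ fun z => ?_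
    show psi p (m * (z.1 ^ 2 - z.2 ^ 2)) = psi p (m * ((z.1 + z.2) * (z.1 - z.2)))
    congr 1
    ring
  have step3 : ∑ w : ZMod p × ZMod p, psi p (m * (w.1 * w.2))
      = ∑ u : ZMod p, if m * u = 0 then (p : ℂ) else 0 := by
    rw [Fintype.sum_prod_type]
    refine Fintype.sum_congr _ _ fun u => ?_
    rw [← sum_psi_mul p hp (m * u)]
    refine Fintype.sum_congr _ _ fun v => ?_
    congr 1
    ring
  rw [step1, step2, step3]
  by_cases hm : m = 0
  · subst hm
    simp only [zero_mul, if_pos]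
    rw [Finset.sum_const]
    simp [ZMod.card]
    ring
  · rw [if_neg hm]
    have hiff : ∀ u : ZMod p, (m * u = 0) = (u = 0) := by
      intro u
      simp [mul_eq_zero, hm]
    simp_rw [hiff]
    rw [Finset.sum_ite_eq' univ (0 : ZMod p) (fun _ => (p : ℂ))]
    simp

theorem stmt_3 (p : ℕ) (hp : p.Prime) (h3 : 3 < p) (h4 : p % 4 = 3) :
    ∑ m ∈ range p,
      (∑ a ∈ range p, e ((m * a ^ 4 : ℕ) / p)) ^ 2 *
      (∑ b ∈ range p, e (-((m * b ^ 4 : ℕ) : ℝ) / p)) ^ 2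
    = (p : ℂ) ^ 4 + (p : ℂ) ^ 3 - (p : ℂ) ^ 2 := by
  haveI : Fact p.Prime := ⟨hp⟩
  haveI : NeZero p := ⟨hp.pos.ne'⟩
  have hA : ∀ m : ℕ, ∑ a ∈ range p, e ((m * a ^ 4 : ℕ) / p)
      = ∑ x : ZMod p, psi p ((m : ZMod p) * x ^ 4) := by
    intro m
    rw [← sum_zmod p (fun x => psi p ((m : ZMod p) * x ^ 4))]
    refine Finset.sum_congr rfl fun a _ => ?_
    rw [e_nat p (m * a ^ 4)]
    congr 1
    push_cast
    ring
  have hB : ∀ m : ℕ, ∑ b ∈ range p, e (-((m * b ^ 4 : ℕ) : ℝ) / p)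
      = ∑ x : ZMod p, psi p (-((m : ZMod p) * x ^ 4)) := by
    intro m
    rw [← sum_zmod p (fun x => psi p (-((m : ZMod p) * x ^ 4)))]
    refine Finset.sum_congr rfl fun b _ => ?_
    rw [e_neg_nat p (m * b ^ 4)]
    congr 2
    push_cast
    ring
  have hterm : ∀ m : ℕ,
      (∑ a ∈ range p, e ((m * a ^ 4 : ℕ) / p)) ^ 2 *
      (∑ b ∈ range p, e (-((m * b ^ 4 : ℕ) : ℝ) / p)) ^ 2
      = if (m : ZMod p) = 0 then (p : ℂ) ^ 4 else (p : ℂ) ^ 2 := by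
    intro m
    rw [hA m, hB m]
    rw [sum_pow4 p hp h4 (fun x => psi p ((m : ZMod p) * x)),
      sum_pow4 p hp h4 (fun x => psi p (-((m : ZMod p) * x)))]
    rw [← mul_pow, key_prod p hp h3 (m : ZMod p)]
    rw [apply_ite (· ^ 2)]
    split <;> ring
  calc ∑ m ∈ range p,
      (∑ a ∈ range p, e ((m * a ^ 4 : ℕ) / p)) ^ 2 *
      (∑ b ∈ range p, e (-((m * b ^ 4 : ℕ) : ℝ) / p)) ^ 2
      = ∑ m ∈ range p, (if (m : ZMod p) = 0 then (p : ℂ) ^ 4 else (p : ℂ) ^ 2) :=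
        Finset.sum_congr rfl fun m _ => hterm m
    _ = ∑ x : ZMod p, (if x = 0 then (p : ℂ) ^ 4 else (p : ℂ) ^ 2) :=
        sum_zmod p (fun x => if x = 0 then (p : ℂ) ^ 4 else (p : ℂ) ^ 2)
    _ = ∑ x : ZMod p, ((p : ℂ) ^ 2 + if x = 0 then (p : ℂ) ^ 4 - (p : ℂ) ^ 2 else 0) := by
        refine Fintype.sum_congr _ _ fun x => ?_
        by_cases hx : x = 0 <;> simp [hx]
    _ = (p : ℂ) ^ 4 + (p : ℂ) ^ 3 - (p : ℂ) ^ 2 := by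
        rw [Finset.sum_add_distrib, Finset.sum_const,
          Finset.sum_ite_eq' univ (0 : ZMod p) (fun _ => (p : ℂ) ^ 4 - (p : ℂ) ^ 2)]
        simp [ZMod.card]
        ring
end

section
/- Let p > 3 be a prime with p ≡ 3 (mod 4), and let C(m,n,4,2;p) = ∑_{a=0}^{p-1} e((ma⁴ + na²)/p). Then ∑_{m=1}^{p-1} ∑_{n=1}^{p-1} |C(m,n,4,2;p)|⁴ = 7p⁴ - 18p³ + 11p². -/
open Finset

/-- The two-term exponential sum `C(m,n,k,h;q) = ∑_{a=0}^{q-1} e((m aᵏ + n aʰ)/q)`. -/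
noncomputable def twoTermExpSum (m n k h q : ℕ) : ℂ :=
  ∑ a ∈ range q, e ((m * a ^ k + n * a ^ h : ℕ) / q)

namespace StmtAux

noncomputable def ζ (p : ℕ) : ℂ := Complex.exp (2 * Real.pi * Complex.I / p)

noncomputable def ψ (p : ℕ) (x : ZMod p) : ℂ := ζ p ^ x.val

variable {p : ℕ} [hp : Fact p.Prime]

lemma pC_ne : (p : ℂ) ≠ 0 := Nat.cast_ne_zero.mpr hp.out.pos.ne'

lemma zeta_pow_p : ζ p ^ p = 1 := by
  rw [ζ, ← Complex.exp_nat_mul]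
  rw [show (p : ℂ) * (2 * (Real.pi : ℂ) * Complex.I / p) = 2 * Real.pi * Complex.I by
    rw [mul_div_assoc']
    exact mul_div_cancel_left₀ _ pC_ne]
  exact Complex.exp_two_pi_mul_I

lemma zeta_ne_one : ζ p ≠ 1 := by
  intro h
  rw [ζ, Complex.exp_eq_one_iff] at h
  obtain ⟨n, hn⟩ := h
  have h2 : (2 : ℂ) * Real.pi * Complex.I ≠ 0 := by
    simp [Real.pi_ne_zero, Complex.I_ne_zero]
  have hpc : (p : ℂ) ≠ 0 := pC_ne
  have : (1 : ℂ) = n * p := by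
    field_simp at hn
    rw [mul_comm] at hn
    linear_combination hn
  have : ((1 : ℤ) : ℂ) = ((n * p : ℤ) : ℂ) := by push_cast; exact this
  have h1 : (1 : ℤ) = n * p := Int.cast_injective this
  have : (p : ℤ) ∣ 1 := ⟨n, by linarith [h1]⟩
  have := Int.le_of_dvd one_pos this
  have := hp.out.two_le
  omega

lemma zeta_pow_mod (k : ℕ) : ζ p ^ (k % p) = ζ p ^ k := by
  conv_rhs => rw [← Nat.div_add_mod k p]
  rw [pow_add, pow_mul, zeta_pow_p, one_pow, one_mul]

lemma psi_natCast (k : ℕ) : ψ p (k : ZMod p) = ζ p ^ k := by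
  rw [ψ, ZMod.val_natCast, zeta_pow_mod]

lemma psi_zero : ψ p 0 = 1 := by
  have := psi_natCast (p := p) 0
  simpa using this

lemma psi_add (x y : ZMod p) : ψ p (x + y) = ψ p x * ψ p y := by
  rw [ψ, ψ, ψ, ZMod.val_add, zeta_pow_mod, pow_add]

lemma psi_conj (x : ZMod p) : (starRingEnd ℂ) (ψ p x) = ψ p (-x) := by
  have h1 : ψ p x * ψ p (-x) = 1 := by
    rw [← psi_add, add_neg_cancel, psi_zero]
  have hconj : (starRingEnd ℂ) (ζ p) = (ζ p)⁻¹ := by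
    rw [ζ, ← Complex.exp_conj, ← Complex.exp_neg]
    congr 1
    simp only [map_div₀, map_mul, Complex.conj_I, map_ofNat, Complex.conj_ofReal,
      Complex.conj_natCast]
    ring
  rw [ψ, map_pow, hconj, inv_pow]
  refine inv_eq_of_mul_eq_one_left ?_
  show ψ p (-x) * ψ p x = 1
  rw [← psi_add, neg_add_cancel, psi_zero]

lemma sum_range_eq_sum_zmod (f : ZMod p → ℂ) :
    ∑ a ∈ range p, f (a : ZMod p) = ∑ x : ZMod p, f x := by
  refine Finset.sum_nbij' (i := fun a => (a : ZMod p)) (j := fun x => x.val) ?_ ?_ ?_ ?_ ?_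
  · intro a _; exact mem_univ _
  · intro x _; exact mem_range.mpr (ZMod.val_lt x)
  · intro a ha
    show ((a : ZMod p)).val = a
    rw [ZMod.val_natCast, Nat.mod_eq_of_lt (mem_range.mp ha)]
  · intro x _
    show ((x.val : ℕ) : ZMod p) = x
    exact ZMod.natCast_rightInverse x
  · intro a _; rfl

lemma sum_psi_eq_zero : ∑ x : ZMod p, ψ p x = 0 := by
  rw [← sum_range_eq_sum_zmod]
  have : ∀ a ∈ range p, ψ p (a : ZMod p) = ζ p ^ a := fun a _ => psi_natCast a
  rw [Finset.sum_congr rfl this, geom_sum_eq zeta_ne_one, zeta_pow_p, sub_self, zero_div]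

lemma sum_psi_mul (t : ZMod p) :
    ∑ m : ZMod p, ψ p (m * t) = if t = 0 then (p : ℂ) else 0 := by
  by_cases ht : t = 0
  · simp [ht, psi_zero, ZMod.card]
  · rw [if_neg ht]
    calc ∑ m : ZMod p, ψ p (m * t) = ∑ m : ZMod p, ψ p m := by
          exact Fintype.sum_equiv (Equiv.mulRight₀ t ht) _ _ (fun m => rfl)
      _ = 0 := sum_psi_eq_zero


lemma two_ne_zero' (hgt : 2 < p) : (2 : ZMod p) ≠ 0 := by
  intro h
  have h2 : ((2 : ℕ) : ZMod p) = 0 := by exact_mod_cast h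
  rw [ZMod.natCast_eq_zero_iff] at h2
  have := Nat.le_of_dvd (by norm_num) h2
  omega

lemma sum_ite_zero_else (A B : ℂ) :
    ∑ t : ZMod p, (if t = 0 then A else B) = A + ((p : ℂ) - 1) * B := by
  have h : ∀ t : ZMod p, (if t = 0 then A else B) = (if t = 0 then A - B else 0) + B := by
    intro t; by_cases h : t = 0 <;> simp [h]
  rw [Finset.sum_congr rfl fun t _ => h t, Finset.sum_add_distrib,
    Fintype.sum_ite_eq' (0 : ZMod p) (fun _ => A - B), Finset.sum_const, Finset.card_univ,
    ZMod.card]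
  have hp1 : (1:ℕ) ≤ p := hp.out.one_lt.le
  rw [nsmul_eq_mul]
  ring

lemma count_mul (c : ZMod p) :
    ∑ u : ZMod p, ∑ v : ZMod p, (if u * v = c then (1:ℂ) else 0)
      = if c = 0 then 2*(p:ℂ) - 1 else (p:ℂ) - 1 := by
  by_cases hc : c = 0
  · subst hc
    rw [if_pos rfl]
    have h : ∀ u : ZMod p, (∑ v : ZMod p, (if u * v = 0 then (1:ℂ) else 0))
        = if u = 0 then (p : ℂ) else 1 := by
      intro u
      by_cases hu : u = 0
      · simp [hu, Finset.card_univ, ZMod.card]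
      · have hiff : ∀ v : ZMod p, (u * v = 0) ↔ (v = 0) := by
          intro v
          constructor
          · intro h; rcases mul_eq_zero.mp h with h' | h'
            · exact absurd h' hu
            · exact h'
          · intro h; rw [h, mul_zero]
        simp only [hiff, hu, if_neg hu]
        exact Fintype.sum_ite_eq' (0 : ZMod p) (fun _ => (1:ℂ))
    rw [Finset.sum_congr rfl fun u _ => h u, sum_ite_zero_else]
    ring
  · rw [if_neg hc]
    have h : ∀ u : ZMod p, (∑ v : ZMod p, (if u * v = c then (1:ℂ) else 0))
        = if u = 0 then 0 else 1 := by
      intro u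
      by_cases hu : u = 0
      · rw [if_pos hu]
        subst hu
        have : ∀ v : ZMod p, ((0 : ZMod p) * v = c) ↔ False := by
          intro v; simp only [zero_mul, iff_false]; exact fun h' => hc h'.symm
        simp only [this, if_false, Finset.sum_const_zero]
      · rw [if_neg hu]
        have hiff : ∀ v : ZMod p, (u * v = c) ↔ (v = u⁻¹ * c) := by
          intro v
          constructor
          · intro h; rw [← h, inv_mul_cancel_left₀ hu]
          · intro h; rw [h, mul_inv_cancel_left₀ hu]
        simp only [hiff]
        exact Fintype.sum_ite_eq' (u⁻¹ * c) (fun _ => (1:ℂ))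
    rw [Finset.sum_congr rfl fun u _ => h u, sum_ite_zero_else]
    ring

lemma sq_eq_iff (x y : ZMod p) : x^2 = y^2 ↔ x = y ∨ x = -y := by
  constructor
  · intro h
    have h0 : (x - y) * (x + y) = 0 := by linear_combination h
    rcases mul_eq_zero.mp h0 with h' | h'
    · left; exact sub_eq_zero.mp h'
    · right; exact eq_neg_of_add_eq_zero_left h'
  · rintro (rfl | rfl)
    · rfl
    · ring

lemma sqcount (hgt : 2 < p) (y : ZMod p) :
    ∑ d : ZMod p, (if y^2 = d^2 then (1:ℂ) else 0) = if y = 0 then 1 else 2 := by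
  by_cases hy : y = 0
  · subst hy
    rw [if_pos rfl]
    have h : ∀ d : ZMod p, ((0:ZMod p)^2 = d^2) ↔ (d = 0) := by
      intro d
      rw [eq_comm]
      simp [pow_eq_zero_iff]
    simp only [h]
    exact Fintype.sum_ite_eq' (0 : ZMod p) (fun _ => (1:ℂ))
  · rw [if_neg hy]
    have hne : y ≠ -y := by
      intro h
      have h2 : (2 : ZMod p) * y = 0 := by linear_combination h
      rcases mul_eq_zero.mp h2 with h' | h'
      · exact two_ne_zero' hgt h'
      · exact hy h'
    have hcond : ∀ d : ZMod p, (y^2 = d^2) ↔ (d = y ∨ d = -y) := by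
      intro d
      rw [eq_comm, sq_eq_iff]
    have hsplit : ∀ d : ZMod p,
        (if d = y ∨ d = -y then (1:ℂ) else 0)
          = (if d = y then (1:ℂ) else 0) + (if d = -y then (1:ℂ) else 0) := by
      intro d
      by_cases h1 : d = y
      · subst h1
        simp [hne]
      · have hne' : ¬(-y = y) := fun h => hne h.symm
        by_cases h2 : d = -y <;> simp [h1, h2, hne']
    simp only [hcond]
    rw [Finset.sum_congr rfl fun d _ => hsplit d, Finset.sum_add_distrib,
      Fintype.sum_ite_eq' y (fun _ => (1:ℂ)), Fintype.sum_ite_eq' (-y) (fun _ => (1:ℂ))]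
    norm_num


lemma pair_reindex (hgt : 2 < p) (K : ZMod p → ZMod p → ℂ) :
    ∑ s : ZMod p, ∑ t : ZMod p, K ((s+t) * (2:ZMod p)⁻¹) ((t-s) * (2:ZMod p)⁻¹)
      = ∑ x : ZMod p, ∑ y : ZMod p, K x y := by
  have h2 : (2:ZMod p) * (2:ZMod p)⁻¹ = 1 := mul_inv_cancel₀ (two_ne_zero' hgt)
  set h : ZMod p := (2:ZMod p)⁻¹ with hh
  rw [← Fintype.sum_prod_type', ← Fintype.sum_prod_type']
  refine Fintype.sum_equiv ⟨fun z => ((z.1 + z.2) * h, (z.2 - z.1) * h),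
      fun w => (w.1 - w.2, w.1 + w.2), ?_, ?_⟩
      (fun z => K ((z.1 + z.2) * h) ((z.2 - z.1) * h)) (fun z => K z.1 z.2) (fun z => rfl)
  · intro z
    refine Prod.ext ?_ ?_
    · show (z.1 + z.2) * h - (z.2 - z.1) * h = z.1
      linear_combination z.1 * h2
    · show (z.1 + z.2) * h + (z.2 - z.1) * h = z.2
      linear_combination z.2 * h2
  · intro w
    refine Prod.ext ?_ ?_
    · show ((w.1 - w.2) + (w.1 + w.2)) * h = w.1
      linear_combination w.1 * h2
    · show ((w.1 + w.2) - (w.1 - w.2)) * h = w.2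
      linear_combination w.2 * h2

lemma countY (hgt : 2 < p) :
    ∑ a : ZMod p, ∑ b : ZMod p, ∑ c : ZMod p, ∑ d : ZMod p,
      (if a^2 + b^2 - c^2 - d^2 = 0 then (1:ℂ) else 0)
      = (p:ℂ)^3 + (p:ℂ)^2 - (p:ℂ) := by
  have h2 : (2:ZMod p) * (2:ZMod p)⁻¹ = 1 := mul_inv_cancel₀ (two_ne_zero' hgt)
  set h : ZMod p := (2:ZMod p)⁻¹ with hh
  -- reorder to a, c, b, d
  have step1 : ∑ a : ZMod p, ∑ b : ZMod p, ∑ c : ZMod p, ∑ d : ZMod p,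
      (if a^2 + b^2 - c^2 - d^2 = 0 then (1:ℂ) else 0)
      = ∑ a : ZMod p, ∑ c : ZMod p, ∑ b : ZMod p, ∑ d : ZMod p,
      (if a^2 + b^2 - c^2 - d^2 = 0 then (1:ℂ) else 0) :=
    Finset.sum_congr rfl fun a _ => Finset.sum_comm
  rw [step1]
  -- reindex (a,c) pair
  rw [← pair_reindex hgt (fun a c => ∑ b : ZMod p, ∑ d : ZMod p,
        (if a^2 + b^2 - c^2 - d^2 = 0 then (1:ℂ) else 0))]
  -- reindex (b,d) pair inside
  have step2 : ∀ s t : ZMod p,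
      (∑ b : ZMod p, ∑ d : ZMod p,
        (if ((s+t)*h)^2 + b^2 - ((t-s)*h)^2 - d^2 = 0 then (1:ℂ) else 0))
      = ∑ u : ZMod p, ∑ v : ZMod p,
        (if ((s+t)*h)^2 + ((u+v)*h)^2 - ((t-s)*h)^2 - ((v-u)*h)^2 = 0 then (1:ℂ) else 0) := by
    intro s t
    rw [← pair_reindex hgt (fun b d =>
      (if ((s+t)*h)^2 + b^2 - ((t-s)*h)^2 - d^2 = 0 then (1:ℂ) else 0))]
  rw [Finset.sum_congr rfl fun s _ => Finset.sum_congr rfl fun t _ => step2 s t]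
  -- simplify the condition
  have hcond : ∀ s t u v : ZMod p,
      (((s+t)*h)^2 + ((u+v)*h)^2 - ((t-s)*h)^2 - ((v-u)*h)^2 = 0) ↔ (u*v = -(s*t)) := by
    intro s t u v
    have hkey : ((s+t)*h)^2 + ((u+v)*h)^2 - ((t-s)*h)^2 - ((v-u)*h)^2 = s*t + u*v := by
      linear_combination (s*t*(2*h+1) + u*v*(2*h+1)) * h2
    rw [hkey]
    constructor
    · intro hx; linear_combination hx
    · intro hx; linear_combination hx
  simp only [hcond]
  -- inner double sum via count_mul
  have step3 : ∀ s t : ZMod p,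
      (∑ u : ZMod p, ∑ v : ZMod p, (if u*v = -(s*t) then (1:ℂ) else 0))
      = if s*t = 0 then 2*(p:ℂ) - 1 else (p:ℂ) - 1 := by
    intro s t
    rw [count_mul (-(s*t))]
    simp [neg_eq_zero]
  rw [Finset.sum_congr rfl fun s _ => Finset.sum_congr rfl fun t _ => step3 s t]
  have step4 : ∀ s : ZMod p,
      (∑ t : ZMod p, (if s*t = 0 then 2*(p:ℂ) - 1 else (p:ℂ) - 1))
      = if s = 0 then (p:ℂ)*(2*(p:ℂ)-1) else (2*(p:ℂ)-1) + ((p:ℂ)-1)*((p:ℂ)-1) := by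
    intro s
    by_cases hs : s = 0
    · rw [if_pos hs]
      subst hs
      rw [Finset.sum_congr rfl fun t _ => by rw [zero_mul, if_pos rfl]]
      rw [Finset.sum_const, Finset.card_univ, ZMod.card, nsmul_eq_mul]
    · rw [if_neg hs]
      have hiff : ∀ t : ZMod p, (s*t = 0) ↔ (t = 0) := by
        intro t
        constructor
        · intro hx; rcases mul_eq_zero.mp hx with h'|h'
          · exact absurd h' hs
          · exact h'
        · intro hx; rw [hx, mul_zero]
      simp only [hiff]
      exact sum_ite_zero_else _ _
  rw [Finset.sum_congr rfl fun s _ => step4 s, sum_ite_zero_else]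
  ring


lemma pow_lemma (hmod : p % 4 = 3) :
    ∃ k : ℕ, Function.Bijective (fun x : ZMod p => x ^ k) ∧ ∀ x : ZMod p, (x^k)^2 = x^4 := by
  have hp2 := hp.out.two_le
  obtain ⟨j, hj⟩ : ∃ j, p = 4*j+3 := ⟨p/4, by omega⟩
  refine ⟨2*j+3, ?_⟩
  set k := 2*j+3 with hk
  have hcop : Nat.Coprime k (p-1) := by
    have h1 : Nat.Coprime k 2 := Nat.coprime_two_right.mpr ⟨j+1, by omega⟩
    have h2 : Nat.Coprime k (2*j+1) := by
      have h3 : Nat.Coprime 2 (2*j+1) := Nat.coprime_two_left.mpr ⟨j, by omega⟩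
      have h4 : Nat.Coprime (2 + 1*(2*j+1)) (2*j+1) :=
        (Nat.coprime_add_mul_right_left 2 (2*j+1) 1).mpr h3
      have h5 : 2 + 1*(2*j+1) = k := by omega
      rwa [h5] at h4
    have h6 : p - 1 = 2*(2*j+1) := by omega
    rw [h6]
    exact Nat.Coprime.mul_right h1 h2
  haveI : NeZero (p-1) := ⟨by omega⟩
  have hone : ((k : ZMod (p-1)) * (k : ZMod (p-1))⁻¹ = 1) := ZMod.coe_mul_inv_eq_one k hcop
  set l := ((k : ZMod (p-1))⁻¹).val with hl
  have hcast : ((k * l : ℕ) : ZMod (p-1)) = ((1 : ℕ) : ZMod (p-1)) := by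
    rw [Nat.cast_mul,
      show ((l:ℕ) : ZMod (p-1)) = (k : ZMod (p-1))⁻¹ from ZMod.natCast_rightInverse _,
      hone, Nat.cast_one]
  have hmodeq : k * l % (p-1) = 1 % (p-1) := (ZMod.natCast_eq_natCast_iff _ _ _).mp hcast
  have h1lt : 1 < p - 1 := by omega
  have h1mod : 1 % (p-1) = 1 := Nat.mod_eq_of_lt h1lt
  obtain ⟨m, hm⟩ : ∃ m, k * l = (p-1)*m + 1 := by
    refine ⟨(k*l)/(p-1), ?_⟩
    have hdm := Nat.div_add_mod (k*l) (p-1)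
    omega
  constructor
  · refine Finite.injective_iff_bijective.mp ?_
    intro x y hxy
    have hid : ∀ z : ZMod p, z ^ (k*l) = z := by
      intro z
      by_cases hz : z = 0
      · subst hz
        rw [zero_pow (by omega : k*l ≠ 0)]
      · rw [hm, pow_add, pow_mul, ZMod.pow_card_sub_one_eq_one hz, one_pow, one_mul, pow_one]
    have hx : x ^ (k*l) = y ^ (k*l) := by
      rw [pow_mul, pow_mul]
      exact congrArg (· ^ l) hxy
    rwa [hid, hid] at hx
  · intro x
    rw [← pow_mul]
    by_cases hx : x = 0
    · subst hx
      rw [zero_pow (by omega : k*2 ≠ 0), zero_pow (by norm_num : (4:ℕ) ≠ 0)]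
    · have hk2 : k * 2 = (p-1) + 4 := by omega
      rw [hk2, pow_add, ZMod.pow_card_sub_one_eq_one hx, one_mul]

lemma countX (hgt : 2 < p) (hmod : p % 4 = 3) :
    ∑ a : ZMod p, ∑ b : ZMod p, ∑ c : ZMod p, ∑ d : ZMod p,
      (if a^4 + b^4 - c^4 - d^4 = 0 then (1:ℂ) else 0)
      = (p:ℂ)^3 + (p:ℂ)^2 - (p:ℂ) := by
  obtain ⟨k, hbij, hsq⟩ := pow_lemma hmod
  have key : ∑ a : ZMod p, ∑ b : ZMod p, ∑ c : ZMod p, ∑ d : ZMod p,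
      (if a^2 + b^2 - c^2 - d^2 = 0 then (1:ℂ) else 0)
      = ∑ a : ZMod p, ∑ b : ZMod p, ∑ c : ZMod p, ∑ d : ZMod p,
      (if a^4 + b^4 - c^4 - d^4 = 0 then (1:ℂ) else 0) := by
    rw [← hbij.sum_comp (fun a => ∑ b : ZMod p, ∑ c : ZMod p, ∑ d : ZMod p,
      (if a^2 + b^2 - c^2 - d^2 = 0 then (1:ℂ) else 0))]
    refine Finset.sum_congr rfl fun a _ => ?_
    rw [← hbij.sum_comp (fun b => ∑ c : ZMod p, ∑ d : ZMod p,
      (if (a^k)^2 + b^2 - c^2 - d^2 = 0 then (1:ℂ) else 0))]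
    refine Finset.sum_congr rfl fun b _ => ?_
    rw [← hbij.sum_comp (fun c => ∑ d : ZMod p,
      (if (a^k)^2 + (b^k)^2 - c^2 - d^2 = 0 then (1:ℂ) else 0))]
    refine Finset.sum_congr rfl fun c _ => ?_
    rw [← hbij.sum_comp (fun d =>
      (if (a^k)^2 + (b^k)^2 - (c^k)^2 - d^2 = 0 then (1:ℂ) else 0))]
    refine Finset.sum_congr rfl fun d _ => ?_
    rw [hsq a, hsq b, hsq c, hsq d]
  rw [← key]
  exact countY hgt

lemma ite_and_one (P Q : Prop) [Decidable P] [Decidable Q] :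
    (if P ∧ Q then (1:ℂ) else 0) = (if P then (1:ℂ) else 0) * (if Q then (1:ℂ) else 0) := by
  by_cases hP : P <;> by_cases hQ : Q <;> simp [hP, hQ]

lemma ite_or_split (P Q : Prop) [Decidable P] [Decidable Q] :
    (if P ∨ Q then (1:ℂ) else 0)
      = (if P then (1:ℂ) else 0) + (if Q then (1:ℂ) else 0) - (if P ∧ Q then (1:ℂ) else 0) := by
  by_cases hP : P <;> by_cases hQ : Q <;> simp [hP, hQ]

lemma sum_factor (f g : ZMod p → ZMod p → ℂ) :
    ∑ a : ZMod p, ∑ b : ZMod p, ∑ c : ZMod p, ∑ d : ZMod p, f a c * g b d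
      = (∑ a : ZMod p, ∑ c : ZMod p, f a c) * (∑ b : ZMod p, ∑ d : ZMod p, g b d) := by
  have h1 : ∀ a b : ZMod p, ∑ c : ZMod p, ∑ d : ZMod p, f a c * g b d
      = (∑ c : ZMod p, f a c) * (∑ d : ZMod p, g b d) :=
    fun a b => (Finset.sum_mul_sum univ univ (f a) (g b)).symm
  rw [Finset.sum_congr rfl fun a _ => Finset.sum_congr rfl fun b _ => h1 a b]
  exact (Finset.sum_mul_sum univ univ _ _).symm

lemma sum_factor' (f g : ZMod p → ZMod p → ℂ) :
    ∑ a : ZMod p, ∑ b : ZMod p, ∑ c : ZMod p, ∑ d : ZMod p, f a d * g b c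
      = (∑ a : ZMod p, ∑ d : ZMod p, f a d) * (∑ b : ZMod p, ∑ c : ZMod p, g b c) := by
  have h1 : ∀ a b : ZMod p, ∑ c : ZMod p, ∑ d : ZMod p, f a d * g b c
      = (∑ d : ZMod p, f a d) * (∑ c : ZMod p, g b c) := by
    intro a b
    rw [Finset.sum_comm]
    simp only [← Finset.mul_sum]
    rw [← Finset.sum_mul]
  rw [Finset.sum_congr rfl fun a _ => Finset.sum_congr rfl fun b _ => h1 a b]
  exact (Finset.sum_mul_sum univ univ _ _).symm

lemma countW (hgt : 2 < p) :
    ∑ a : ZMod p, ∑ c : ZMod p, (if a^2 = c^2 then (1:ℂ) else 0) = 2*(p:ℂ) - 1 := by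
  rw [Finset.sum_congr rfl fun a _ => sqcount hgt a, sum_ite_zero_else]
  ring

lemma joint_iff (hgt : 2 < p) (a b c d : ZMod p) :
    (a^4+b^4-c^4-d^4 = 0 ∧ a^2+b^2-c^2-d^2 = 0)
      ↔ ((a^2=c^2 ∧ b^2=d^2) ∨ (a^2=d^2 ∧ b^2=c^2)) := by
  constructor
  · rintro ⟨h4e, h2e⟩
    have key : ((a^2-c^2) * (a^2-d^2)) = 0 := by
      have h2' : (2:ZMod p) * ((a^2-c^2)*(a^2-d^2)) = 0 := by
        linear_combination (a^2 - b^2 - c^2 - d^2) * h2e + h4e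
      rcases mul_eq_zero.mp h2' with hcase | hcase
      · exact absurd hcase (two_ne_zero' hgt)
      · exact hcase
    rcases mul_eq_zero.mp key with hcase | hcase
    · left
      exact ⟨by linear_combination hcase, by linear_combination h2e - hcase⟩
    · right
      exact ⟨by linear_combination hcase, by linear_combination h2e - hcase⟩
  · rintro (⟨h1, h2'⟩ | ⟨h1, h2'⟩)
    · exact ⟨by linear_combination (a^2+c^2)*h1 + (b^2+d^2)*h2', by linear_combination h1 + h2'⟩
    · exact ⟨by linear_combination (a^2+d^2)*h1 + (b^2+c^2)*h2', by linear_combination h1 + h2'⟩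

lemma pq_iff (a b c d : ZMod p) :
    ((a^2=c^2 ∧ b^2=d^2) ∧ (a^2=d^2 ∧ b^2=c^2)) ↔ (a^2=b^2 ∧ a^2=c^2 ∧ a^2=d^2) := by
  constructor
  · rintro ⟨⟨h1,h2⟩,⟨h3,h4⟩⟩
    exact ⟨h3.trans h2.symm, h1, h3⟩
  · rintro ⟨h1, h2, h3⟩
    exact ⟨⟨h2, h1.symm.trans h3⟩, ⟨h3, h1.symm.trans h2⟩⟩

lemma countPQ (hgt : 2 < p) :
    ∑ a : ZMod p, ∑ b : ZMod p, ∑ c : ZMod p, ∑ d : ZMod p,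
      (if (a^2=c^2 ∧ b^2=d^2) ∧ (a^2=d^2 ∧ b^2=c^2) then (1:ℂ) else 0)
      = 8*(p:ℂ) - 7 := by
  simp only [pq_iff, ite_and_one]
  have hd : ∀ a b c : ZMod p,
      ∑ d : ZMod p, ((if a^2=b^2 then (1:ℂ) else 0) *
        ((if a^2=c^2 then (1:ℂ) else 0) * (if a^2=d^2 then (1:ℂ) else 0)))
      = (if a^2=b^2 then (1:ℂ) else 0) * (if a^2=c^2 then (1:ℂ) else 0)
          * (if a = 0 then (1:ℂ) else 2) := by
    intro a b c
    simp only [← mul_assoc]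
    rw [← Finset.mul_sum, sqcount hgt a]
  rw [Finset.sum_congr rfl fun a _ => Finset.sum_congr rfl fun b _ =>
    Finset.sum_congr rfl fun c _ => hd a b c]
  have hc : ∀ a b : ZMod p,
      ∑ c : ZMod p, ((if a^2=b^2 then (1:ℂ) else 0) * (if a^2=c^2 then (1:ℂ) else 0)
          * (if a = 0 then (1:ℂ) else 2))
      = (if a^2=b^2 then (1:ℂ) else 0) * (if a = 0 then (1:ℂ) else 2)
          * (if a = 0 then (1:ℂ) else 2) := by
    intro a b
    have harr : ∀ c : ZMod p, (if a^2=b^2 then (1:ℂ) else 0) * (if a^2=c^2 then (1:ℂ) else 0)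
          * (if a = 0 then (1:ℂ) else 2)
        = ((if a^2=b^2 then (1:ℂ) else 0) * (if a = 0 then (1:ℂ) else 2))
            * (if a^2=c^2 then (1:ℂ) else 0) := fun c => by ring
    rw [Finset.sum_congr rfl fun c _ => harr c, ← Finset.mul_sum, sqcount hgt a]
  rw [Finset.sum_congr rfl fun a _ => Finset.sum_congr rfl fun b _ => hc a b]
  have hb : ∀ a : ZMod p,
      ∑ b : ZMod p, ((if a^2=b^2 then (1:ℂ) else 0) * (if a = 0 then (1:ℂ) else 2)
          * (if a = 0 then (1:ℂ) else 2))
      = (if a = 0 then (1:ℂ) else 2) * (if a = 0 then (1:ℂ) else 2)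
          * (if a = 0 then (1:ℂ) else 2) := by
    intro a
    have harr : ∀ b : ZMod p, (if a^2=b^2 then (1:ℂ) else 0) * (if a = 0 then (1:ℂ) else 2)
          * (if a = 0 then (1:ℂ) else 2)
        = ((if a = 0 then (1:ℂ) else 2) * (if a = 0 then (1:ℂ) else 2))
            * (if a^2=b^2 then (1:ℂ) else 0) := fun b => by ring
    rw [Finset.sum_congr rfl fun b _ => harr b, ← Finset.mul_sum, sqcount hgt a]
  rw [Finset.sum_congr rfl fun a _ => hb a]
  have hmerge : ∀ a : ZMod p,
      (if a = 0 then (1:ℂ) else 2) * (if a = 0 then (1:ℂ) else 2)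
          * (if a = 0 then (1:ℂ) else 2)
      = (if a = 0 then (1:ℂ) else 8) := by
    intro a
    by_cases ha : a = 0 <;> simp [ha] <;> norm_num
  rw [Finset.sum_congr rfl fun a _ => hmerge a, sum_ite_zero_else]
  ring

lemma countJoint (hgt : 2 < p) :
    ∑ a : ZMod p, ∑ b : ZMod p, ∑ c : ZMod p, ∑ d : ZMod p,
      (if a^4+b^4-c^4-d^4 = 0 ∧ a^2+b^2-c^2-d^2 = 0 then (1:ℂ) else 0)
      = 8*(p:ℂ)^2 - 16*(p:ℂ) + 9 := by
  simp only [joint_iff hgt, ite_or_split]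
  simp only [Finset.sum_sub_distrib, Finset.sum_add_distrib]
  have hP : ∑ a : ZMod p, ∑ b : ZMod p, ∑ c : ZMod p, ∑ d : ZMod p,
      (if a^2=c^2 ∧ b^2=d^2 then (1:ℂ) else 0) = (2*(p:ℂ)-1) * (2*(p:ℂ)-1) := by
    simp only [ite_and_one]
    rw [sum_factor (fun a c => if a^2 = c^2 then (1:ℂ) else 0)
      (fun b d => if b^2 = d^2 then (1:ℂ) else 0), countW hgt]
  have hQ : ∑ a : ZMod p, ∑ b : ZMod p, ∑ c : ZMod p, ∑ d : ZMod p,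
      (if a^2=d^2 ∧ b^2=c^2 then (1:ℂ) else 0) = (2*(p:ℂ)-1) * (2*(p:ℂ)-1) := by
    simp only [ite_and_one]
    rw [sum_factor' (fun a d => if a^2 = d^2 then (1:ℂ) else 0)
      (fun b c => if b^2 = c^2 then (1:ℂ) else 0), countW hgt]
  rw [hP, hQ, countPQ hgt]
  ring


lemma twoTerm_eq (m n : ℕ) :
    twoTermExpSum m n 4 2 p
      = ∑ x : ZMod p, ψ p ((m : ZMod p) * x^4 + (n : ZMod p) * x^2) := by
  rw [twoTermExpSum,
    ← sum_range_eq_sum_zmod (f := fun x => ψ p ((m : ZMod p) * x^4 + (n : ZMod p) * x^2))]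
  refine Finset.sum_congr rfl fun a _ => ?_
  have h1 : ((m : ZMod p) * (a : ZMod p)^4 + (n : ZMod p) * (a : ZMod p)^2)
      = ((m * a^4 + n * a^2 : ℕ) : ZMod p) := by push_cast; ring
  rw [h1, psi_natCast, e, ζ, ← Complex.exp_nat_mul]
  congr 1
  push_cast
  ring

lemma inner_eq (m n : ZMod p) :
    (∑ x : ZMod p, ψ p (m * x^4 + n * x^2))
        * (starRingEnd ℂ) (∑ x : ZMod p, ψ p (m * x^4 + n * x^2))
      = ∑ a : ZMod p, ∑ c : ZMod p, ψ p (m * (a^4-c^4) + n * (a^2-c^2)) := by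
  rw [map_sum, Finset.sum_mul_sum]
  refine Finset.sum_congr rfl fun a _ => Finset.sum_congr rfl fun c _ => ?_
  rw [psi_conj, ← psi_add]
  congr 1
  ring

lemma abs4_eq (m n : ZMod p) :
    ((∑ x : ZMod p, ψ p (m * x^4 + n * x^2))
        * (starRingEnd ℂ) (∑ x : ZMod p, ψ p (m * x^4 + n * x^2)))^2
      = ∑ a : ZMod p, ∑ b : ZMod p, ∑ c : ZMod p, ∑ d : ZMod p,
          ψ p (m * (a^4+b^4-c^4-d^4)) * ψ p (n * (a^2+b^2-c^2-d^2)) := by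
  rw [inner_eq, pow_two, Finset.sum_mul_sum]
  refine Finset.sum_congr rfl fun a _ => Finset.sum_congr rfl fun b _ => ?_
  rw [Finset.sum_mul_sum]
  refine Finset.sum_congr rfl fun c _ => Finset.sum_congr rfl fun d _ => ?_
  rw [← psi_add]
  have h1 : (m * (a^4-c^4) + n * (a^2-c^2)) + (m * (b^4-d^4) + n * (b^2-d^2))
      = m * (a^4+b^4-c^4-d^4) + n * (a^2+b^2-c^2-d^2) := by ring
  rw [h1, psi_add]

lemma sum_Icc_eq (f : ZMod p → ℂ) :
    ∑ m ∈ Icc 1 (p-1), f (m : ZMod p) = ∑ x ∈ (univ.erase (0 : ZMod p)), f x := by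
  have hp2 := hp.out.two_le
  refine Finset.sum_nbij' (i := fun m => (m : ZMod p)) (j := fun x => x.val) ?_ ?_ ?_ ?_ ?_
  · intro m hm
    rw [mem_Icc] at hm
    show (m : ZMod p) ∈ univ.erase (0 : ZMod p)
    refine mem_erase.mpr ⟨?_, mem_univ _⟩
    intro h0
    have hv : ((m : ZMod p)).val = 0 := by rw [h0, ZMod.val_zero]
    rw [ZMod.val_natCast, Nat.mod_eq_of_lt (by omega : m < p)] at hv
    omega
  · intro x hx
    have hx0 := (mem_erase.mp hx).1
    have hv : x.val ≠ 0 := fun h => hx0 ((ZMod.val_eq_zero x).mp h)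
    have hlt : x.val < p := ZMod.val_lt x
    show x.val ∈ Icc 1 (p-1)
    rw [mem_Icc]
    omega
  · intro m hm
    rw [mem_Icc] at hm
    show ((m : ZMod p)).val = m
    rw [ZMod.val_natCast, Nat.mod_eq_of_lt (by omega : m < p)]
  · intro x _
    show ((x.val : ℕ) : ZMod p) = x
    exact ZMod.natCast_rightInverse x
  · intro m _
    rfl

lemma sum_psi_erase (t : ZMod p) :
    ∑ m ∈ univ.erase (0 : ZMod p), ψ p (m * t) = (if t = 0 then (p:ℂ) else 0) - 1 := by
  rw [Finset.sum_erase_eq_sub (Finset.mem_univ (0 : ZMod p)), sum_psi_mul, zero_mul, psi_zero]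

lemma swap5 (s : Finset (ZMod p)) (f : ZMod p → ZMod p → ZMod p → ZMod p → ZMod p → ℂ) :
    ∑ m ∈ s, ∑ a : ZMod p, ∑ b : ZMod p, ∑ c : ZMod p, ∑ d : ZMod p, f m a b c d
      = ∑ a : ZMod p, ∑ b : ZMod p, ∑ c : ZMod p, ∑ d : ZMod p, ∑ m ∈ s, f m a b c d := by
  rw [Finset.sum_comm]
  refine Finset.sum_congr rfl fun a _ => ?_
  rw [Finset.sum_comm]
  refine Finset.sum_congr rfl fun b _ => ?_
  rw [Finset.sum_comm]
  refine Finset.sum_congr rfl fun c _ => ?_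
  exact Finset.sum_comm

lemma ff (X Y : ZMod p) :
    ((if X = 0 then (p:ℂ) else 0) - 1) * ((if Y = 0 then (p:ℂ) else 0) - 1)
    = (p:ℂ)^2 * (if X = 0 ∧ Y = 0 then (1:ℂ) else 0)
      - (p:ℂ) * (if X = 0 then (1:ℂ) else 0)
      - (p:ℂ) * (if Y = 0 then (1:ℂ) else 0) + 1 := by
  by_cases h1 : X = 0 <;> by_cases h2 : Y = 0 <;> simp [h1, h2] <;> ring

lemma sum_one : ∑ a : ZMod p, ∑ b : ZMod p, ∑ c : ZMod p, ∑ d : ZMod p, (1:ℂ) = (p:ℂ)^4 := by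
  simp [Finset.sum_const, Finset.card_univ, ZMod.card]
  ring


set_option maxHeartbeats 1000000 in
lemma master (hgt : 2 < p) (hmod : p % 4 = 3) :
    ∑ m ∈ Icc 1 (p-1), ∑ n ∈ Icc 1 (p-1),
      ((∑ x : ZMod p, ψ p ((m:ZMod p) * x^4 + (n:ZMod p) * x^2)) *
        (starRingEnd ℂ) (∑ x : ZMod p, ψ p ((m:ZMod p) * x^4 + (n:ZMod p) * x^2)))^2
    = 7*(p:ℂ)^4 - 18*(p:ℂ)^3 + 11*(p:ℂ)^2 := by
  calc ∑ m ∈ Icc 1 (p-1), ∑ n ∈ Icc 1 (p-1),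
      ((∑ x : ZMod p, ψ p ((m:ZMod p) * x^4 + (n:ZMod p) * x^2)) *
        (starRingEnd ℂ) (∑ x : ZMod p, ψ p ((m:ZMod p) * x^4 + (n:ZMod p) * x^2)))^2
      = ∑ m ∈ Icc 1 (p-1), ∑ n ∈ Icc 1 (p-1), ∑ a : ZMod p, ∑ b : ZMod p, ∑ c : ZMod p,
          ∑ d : ZMod p, ψ p ((m:ZMod p) * (a^4+b^4-c^4-d^4)) * ψ p ((n:ZMod p) * (a^2+b^2-c^2-d^2)) :=
        Finset.sum_congr rfl fun m _ => Finset.sum_congr rfl fun n _ => abs4_eq _ _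
    _ = ∑ m ∈ Icc 1 (p-1), ∑ y ∈ univ.erase (0:ZMod p), ∑ a : ZMod p, ∑ b : ZMod p,
          ∑ c : ZMod p, ∑ d : ZMod p,
          ψ p ((m:ZMod p) * (a^4+b^4-c^4-d^4)) * ψ p (y * (a^2+b^2-c^2-d^2)) :=
        Finset.sum_congr rfl fun m _ => sum_Icc_eq
          (fun y => ∑ a : ZMod p, ∑ b : ZMod p, ∑ c : ZMod p, ∑ d : ZMod p,
            ψ p ((m:ZMod p) * (a^4+b^4-c^4-d^4)) * ψ p (y * (a^2+b^2-c^2-d^2)))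
    _ = ∑ x ∈ univ.erase (0:ZMod p), ∑ y ∈ univ.erase (0:ZMod p), ∑ a : ZMod p, ∑ b : ZMod p,
          ∑ c : ZMod p, ∑ d : ZMod p,
          ψ p (x * (a^4+b^4-c^4-d^4)) * ψ p (y * (a^2+b^2-c^2-d^2)) :=
        sum_Icc_eq
          (fun x => ∑ y ∈ univ.erase (0:ZMod p), ∑ a : ZMod p, ∑ b : ZMod p, ∑ c : ZMod p,
            ∑ d : ZMod p, ψ p (x * (a^4+b^4-c^4-d^4)) * ψ p (y * (a^2+b^2-c^2-d^2)))
    _ = ∑ x ∈ univ.erase (0:ZMod p), ∑ a : ZMod p, ∑ b : ZMod p, ∑ c : ZMod p, ∑ d : ZMod p,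
          ∑ y ∈ univ.erase (0:ZMod p),
          ψ p (x * (a^4+b^4-c^4-d^4)) * ψ p (y * (a^2+b^2-c^2-d^2)) :=
        Finset.sum_congr rfl fun x _ => swap5 (univ.erase (0:ZMod p))
          (fun y a b c d => ψ p (x * (a^4+b^4-c^4-d^4)) * ψ p (y * (a^2+b^2-c^2-d^2)))
    _ = ∑ a : ZMod p, ∑ b : ZMod p, ∑ c : ZMod p, ∑ d : ZMod p,
          ∑ x ∈ univ.erase (0:ZMod p), ∑ y ∈ univ.erase (0:ZMod p),
          ψ p (x * (a^4+b^4-c^4-d^4)) * ψ p (y * (a^2+b^2-c^2-d^2)) :=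
        swap5 (univ.erase (0:ZMod p))
          (fun x a b c d => ∑ y ∈ univ.erase (0:ZMod p),
            ψ p (x * (a^4+b^4-c^4-d^4)) * ψ p (y * (a^2+b^2-c^2-d^2)))
    _ = ∑ a : ZMod p, ∑ b : ZMod p, ∑ c : ZMod p, ∑ d : ZMod p,
          ((if a^4+b^4-c^4-d^4 = 0 then (p:ℂ) else 0) - 1) *
          ((if a^2+b^2-c^2-d^2 = 0 then (p:ℂ) else 0) - 1) := by
        refine Finset.sum_congr rfl fun a _ => Finset.sum_congr rfl fun b _ =>
          Finset.sum_congr rfl fun c _ => Finset.sum_congr rfl fun d _ => ?_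
        rw [← Finset.sum_mul_sum, sum_psi_erase, sum_psi_erase]
    _ = 7*(p:ℂ)^4 - 18*(p:ℂ)^3 + 11*(p:ℂ)^2 := by
        simp only [ff, Finset.sum_sub_distrib, Finset.sum_add_distrib, ← Finset.mul_sum]
        rw [countJoint hgt, countX hgt hmod, countY hgt, sum_one]
        ring

end StmtAux

theorem stmt_5 (p : ℕ) (hp : p.Prime) (h3 : 3 < p) (h4 : p % 4 = 3) :
    ∑ m ∈ Icc 1 (p - 1), ∑ n ∈ Icc 1 (p - 1),
      (‖twoTermExpSum m n 4 2 p‖) ^ 4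
    = 7 * (p : ℝ) ^ 4 - 18 * (p : ℝ) ^ 3 + 11 * (p : ℝ) ^ 2 := by
  haveI hF : Fact p.Prime := ⟨hp⟩
  have hgt : 2 < p := by omega
  apply Complex.ofReal_injective
  push_cast
  have hsummand : ∀ m n : ℕ, ((‖twoTermExpSum m n 4 2 p‖ : ℝ) : ℂ)^4
      = ((∑ x : ZMod p, StmtAux.ψ p ((m:ZMod p) * x^4 + (n:ZMod p) * x^2)) *
          (starRingEnd ℂ) (∑ x : ZMod p, StmtAux.ψ p ((m:ZMod p) * x^4 + (n:ZMod p) * x^2)))^2 := by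
    intro m n
    rw [← StmtAux.twoTerm_eq, Complex.mul_conj, ← Complex.sq_norm]
    push_cast
    ring
  rw [Finset.sum_congr rfl fun m _ => Finset.sum_congr rfl fun n _ => hsummand m n,
    StmtAux.master hgt h4]
end

section
/- Let p be an odd prime with p ≡ 3 (mod 4), and let χ₁, χ₂ be odd Dirichlet characters mod p with χ₁χ₂ not the principal character. Then ∑_{a=0}^{p-1} ∑_{b=0}^{p-1} ∑_{c=0}^{p-1} ∑_{d=0}^{p-1} (χ₁χ₂)‾(a⁴+b⁴-c⁴-d⁴) · (χ₁χ₂)(a²+b²-c²-d²) = 0. -/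
open Finset

lemma aux_sum_range {p : ℕ} [NeZero p] (f : ZMod p → ℂ) :
    ∑ i ∈ range p, f (i : ZMod p) = ∑ x : ZMod p, f x := by
  refine Finset.sum_nbij' (fun i => (i : ZMod p)) (fun x => x.val) ?_ ?_ ?_ ?_ ?_
  · intro a _; exact mem_univ _
  · intro x _; simpa using ZMod.val_lt x
  · intro a ha; exact ZMod.val_cast_of_lt (by simpa using ha)
  · intro x _; exact ZMod.natCast_rightInverse x
  · intro a _; rfl

lemma aux_sum_range4 {p : ℕ} [NeZero p] (f : ZMod p → ZMod p → ZMod p → ZMod p → ℂ) :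
    (∑ a ∈ range p, ∑ b ∈ range p, ∑ c ∈ range p, ∑ d ∈ range p,
      f (a : ZMod p) (b : ZMod p) (c : ZMod p) (d : ZMod p))
    = ∑ a : ZMod p, ∑ b : ZMod p, ∑ c : ZMod p, ∑ d : ZMod p, f a b c d := by
  rw [aux_sum_range (fun a => ∑ b ∈ range p, ∑ c ∈ range p, ∑ d ∈ range p,
    f a (b : ZMod p) (c : ZMod p) (d : ZMod p))]
  refine Fintype.sum_congr _ _ fun a => ?_
  rw [aux_sum_range (fun b => ∑ c ∈ range p, ∑ d ∈ range p, f a b (c : ZMod p) (d : ZMod p))]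
  refine Fintype.sum_congr _ _ fun b => ?_
  rw [aux_sum_range (fun c => ∑ d ∈ range p, f a b c (d : ZMod p))]
  refine Fintype.sum_congr _ _ fun c => ?_
  exact aux_sum_range (fun d => f a b c d)

theorem stmt_9 (p : ℕ) [Fact p.Prime] (h4 : p % 4 = 3)
    (χ₁ χ₂ : DirichletCharacter ℂ p) (hχ₁ : χ₁ (-1) = -1) (hχ₂ : χ₂ (-1) = -1)
    (hne : χ₁ * χ₂ ≠ 1) :
    ∑ a ∈ range p, ∑ b ∈ range p, ∑ c ∈ range p, ∑ d ∈ range p,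
      (starRingEnd ℂ) ((χ₁ * χ₂)
        ((a : ZMod p) ^ 4 + (b : ZMod p) ^ 4 - (c : ZMod p) ^ 4 - (d : ZMod p) ^ 4)) *
      (χ₁ * χ₂)
        ((a : ZMod p) ^ 2 + (b : ZMod p) ^ 2 - (c : ZMod p) ^ 2 - (d : ZMod p) ^ 2)
    = 0 := by
  set χ := χ₁ * χ₂ with hχdef
  have hχeven : χ (-1) = 1 := by
    rw [hχdef, MulChar.mul_apply, hχ₁, hχ₂]; ring
  have hns : ¬ IsSquare (-1 : ZMod p) := by
    rw [ZMod.exists_sq_eq_neg_one_iff]; simp [h4]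
  -- find a unit t with χ t ^ 2 ≠ 1
  have hex : ∃ t : (ZMod p)ˣ, χ (t : ZMod p) ^ 2 ≠ 1 := by
    by_contra hc
    push_neg at hc
    apply hne
    rw [MulChar.eq_one_iff]
    have key : ∀ w : ZMod p, w ≠ 0 → IsSquare w → χ w = 1 := by
      rintro w hw ⟨v, hv⟩
      have hv0 : v ≠ 0 := by rintro rfl; simp at hv; exact hw hv
      have h1 := hc (isUnit_iff_ne_zero.mpr hv0).unit
      rw [IsUnit.unit_spec] at h1
      rw [hv, map_mul, ← sq, h1]
    intro u
    by_cases h : IsSquare ((u : ZMod p))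
    · exact key _ (Units.ne_zero u) h
    · have h2 : IsSquare (-(u : ZMod p)) := by
        have hq : quadraticChar (ZMod p) (-(u : ZMod p)) = 1 := by
          rw [show -(u : ZMod p) = -1 * u by ring, map_mul,
            quadraticChar_neg_one_iff_not_isSquare.mpr hns,
            quadraticChar_neg_one_iff_not_isSquare.mpr h]
          ring
        exact (quadraticChar_one_iff_isSquare (neg_ne_zero.mpr (Units.ne_zero u))).mp hq
      have h3 := key _ (neg_ne_zero.mpr (Units.ne_zero u)) h2
      have h4' : χ (u : ZMod p) = χ (-1) * χ (-(u : ZMod p)) := by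
        rw [← map_mul]; ring_nf
      rw [h4', hχeven, h3, one_mul]
  obtain ⟨t, ht⟩ := hex
  set z : ℂ := χ (t : ZMod p) with hz
  have hnorm : ‖z‖ = 1 := χ.unit_norm_eq_one t
  have hzz : (starRingEnd ℂ) z * z = 1 := by
    rw [mul_comm, Complex.mul_conj, Complex.normSq_eq_norm_sq, hnorm]
    norm_num
  have ht0 : (t : ZMod p) ≠ 0 := Units.ne_zero t
  have step1 : ∀ (g : ZMod p → ℂ), (∑ x : ZMod p, g ((t : ZMod p) * x)) = ∑ x : ZMod p, g x :=
    fun g => Fintype.sum_equiv (Equiv.mulLeft₀ _ ht0) _ g (fun x => rfl)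
  have step4 : ∀ (g : ZMod p → ZMod p → ZMod p → ZMod p → ℂ),
      (∑ a : ZMod p, ∑ b : ZMod p, ∑ c : ZMod p, ∑ d : ZMod p,
        g ((t : ZMod p) * a) ((t : ZMod p) * b) ((t : ZMod p) * c) ((t : ZMod p) * d))
      = ∑ a : ZMod p, ∑ b : ZMod p, ∑ c : ZMod p, ∑ d : ZMod p, g a b c d := by
    intro g
    refine (step1 (fun a => ∑ b : ZMod p, ∑ c : ZMod p, ∑ d : ZMod p,
      g a ((t : ZMod p) * b) ((t : ZMod p) * c) ((t : ZMod p) * d))).trans ?_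
    refine Fintype.sum_congr _ _ fun a => ?_
    refine (step1 (fun b => ∑ c : ZMod p, ∑ d : ZMod p,
      g a b ((t : ZMod p) * c) ((t : ZMod p) * d))).trans ?_
    refine Fintype.sum_congr _ _ fun b => ?_
    refine (step1 (fun c => ∑ d : ZMod p, g a b c ((t : ZMod p) * d))).trans ?_
    refine Fintype.sum_congr _ _ fun c => ?_
    exact step1 (fun d => g a b c d)
  rw [aux_sum_range4 (fun a b c d => (starRingEnd ℂ)
      (χ (a ^ 4 + b ^ 4 - c ^ 4 - d ^ 4)) * χ (a ^ 2 + b ^ 2 - c ^ 2 - d ^ 2))]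
  set S : ℂ := ∑ a : ZMod p, ∑ b : ZMod p, ∑ c : ZMod p, ∑ d : ZMod p,
    (starRingEnd ℂ) (χ (a ^ 4 + b ^ 4 - c ^ 4 - d ^ 4)) * χ (a ^ 2 + b ^ 2 - c ^ 2 - d ^ 2)
    with hS
  have hsub : S = (starRingEnd ℂ) z ^ 2 * S := by
    conv_lhs => rw [hS, ← step4 (fun a b c d => (starRingEnd ℂ)
      (χ (a ^ 4 + b ^ 4 - c ^ 4 - d ^ 4)) * χ (a ^ 2 + b ^ 2 - c ^ 2 - d ^ 2))]
    rw [hS, Finset.mul_sum]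
    refine Fintype.sum_congr _ _ fun a => ?_
    rw [Finset.mul_sum]
    refine Fintype.sum_congr _ _ fun b => ?_
    rw [Finset.mul_sum]
    refine Fintype.sum_congr _ _ fun c => ?_
    rw [Finset.mul_sum]
    refine Fintype.sum_congr _ _ fun d => ?_
    show (starRingEnd ℂ) (χ (((t : ZMod p) * a) ^ 4 + ((t : ZMod p) * b) ^ 4
        - ((t : ZMod p) * c) ^ 4 - ((t : ZMod p) * d) ^ 4)) *
      χ (((t : ZMod p) * a) ^ 2 + ((t : ZMod p) * b) ^ 2
        - ((t : ZMod p) * c) ^ 2 - ((t : ZMod p) * d) ^ 2) = _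
    have h1 : ((t : ZMod p) * a) ^ 4 + ((t : ZMod p) * b) ^ 4
        - ((t : ZMod p) * c) ^ 4 - ((t : ZMod p) * d) ^ 4
        = (t : ZMod p) ^ 4 * (a ^ 4 + b ^ 4 - c ^ 4 - d ^ 4) := by ring
    have h2 : ((t : ZMod p) * a) ^ 2 + ((t : ZMod p) * b) ^ 2
        - ((t : ZMod p) * c) ^ 2 - ((t : ZMod p) * d) ^ 2
        = (t : ZMod p) ^ 2 * (a ^ 2 + b ^ 2 - c ^ 2 - d ^ 2) := by ring
    simp only [h1, h2, map_mul, map_pow]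
    rw [← hz]
    have : (starRingEnd ℂ) z ^ 4 * z ^ 2
        = ((starRingEnd ℂ) z * z) ^ 2 * (starRingEnd ℂ) z ^ 2 := by ring
    calc (starRingEnd ℂ) z ^ 4 * (starRingEnd ℂ) (χ (a ^ 4 + b ^ 4 - c ^ 4 - d ^ 4)) *
          (z ^ 2 * χ (a ^ 2 + b ^ 2 - c ^ 2 - d ^ 2))
        = ((starRingEnd ℂ) z * z) ^ 2 * (starRingEnd ℂ) z ^ 2 *
          ((starRingEnd ℂ) (χ (a ^ 4 + b ^ 4 - c ^ 4 - d ^ 4)) *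
            χ (a ^ 2 + b ^ 2 - c ^ 2 - d ^ 2)) := by ring
      _ = _ := by rw [hzz]; ring
  have hc1 : (starRingEnd ℂ) z ^ 2 ≠ 1 := by
    intro h
    apply ht
    have h' := congrArg (starRingEnd ℂ) h
    simpa using h'
  have hfin : (1 - (starRingEnd ℂ) z ^ 2) * S = 0 := by
    rw [sub_mul, one_mul, ← hsub, sub_self]
  rcases mul_eq_zero.mp hfin with h | h
  · exact absurd (by linear_combination -h : (starRingEnd ℂ) z ^ 2 = 1) hc1
  · exact h
end

section
/- Let p be an odd prime with p ≡ 3 (mod 4), and let χ₁, χ₂ be odd Dirichlet characters mod p with χ₁χ₂ not principal. Then ∑_{a,b,c,d=0}^{p-1} (χ₁χ₂)‾(a⁵+b⁵-c⁵-d⁵) · (χ₁χ₂)(a+b-c-d) = 0. -/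
open Finset

theorem stmt_10 (p : ℕ) [Fact p.Prime] (h4 : p % 4 = 3)
    (χ₁ χ₂ : DirichletCharacter ℂ p) (hχ₁ : χ₁ (-1) = -1) (hχ₂ : χ₂ (-1) = -1)
    (hne : χ₁ * χ₂ ≠ 1) :
    ∑ a ∈ range p, ∑ b ∈ range p, ∑ c ∈ range p, ∑ d ∈ range p,
      (starRingEnd ℂ) ((χ₁ * χ₂)
        ((a : ZMod p) ^ 5 + (b : ZMod p) ^ 5 - (c : ZMod p) ^ 5 - (d : ZMod p) ^ 5)) *
      (χ₁ * χ₂) ((a : ZMod p) + (b : ZMod p) - (c : ZMod p) - (d : ZMod p))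
    = 0 := by
  set ψ := χ₁ * χ₂ with hψdef
  have hp3 : 3 ≤ p := by omega
  haveI : NeZero p := ⟨by omega⟩
  have hψ1 : ψ (-1) = 1 := by
    rw [hψdef, MulChar.mul_apply, hχ₁, hχ₂]; ring
  have hcard : Fintype.card (ZMod p)ˣ = p - 1 := ZMod.card_units p
  -- every unit value of ψ raised to p-1 is 1
  have hpow : ∀ u : (ZMod p)ˣ, (ψ (u : ZMod p)) ^ (p - 1) = 1 := by
    intro u
    rw [← map_pow, ← Units.val_pow_eq_pow_val, ← hcard, pow_card_eq_one, Units.val_one, map_one]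
  -- existence of a unit with ψ(u)^4 ≠ 1
  have hex : ∃ u : (ZMod p)ˣ, (ψ (u : ZMod p)) ^ 4 ≠ 1 := by
    by_contra h
    push_neg at h
    obtain ⟨g, hg⟩ := IsCyclic.exists_generator (α := (ZMod p)ˣ)
    have hgpow : ∀ u : (ZMod p)ˣ, ∃ n : ℕ, g ^ n = u := by
      intro u
      have := hg u
      rw [← mem_powers_iff_mem_zpowers] at this
      exact (Submonoid.mem_powers_iff _ _).mp this
    have hord2 : (ψ (g : ZMod p)) ^ 2 = 1 := by
      have d1 : orderOf (ψ (g : ZMod p)) ∣ 4 := orderOf_dvd_of_pow_eq_one (h g)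
      have d2 : orderOf (ψ (g : ZMod p)) ∣ p - 1 := orderOf_dvd_of_pow_eq_one (hpow g)
      have hmod : (p - 1) % 4 = 2 := by omega
      have hgcd : Nat.gcd 4 (p - 1) = 2 := by rw [Nat.gcd_rec, hmod]; decide
      exact orderOf_dvd_iff_pow_eq_one.mp (hgcd ▸ Nat.dvd_gcd d1 d2)
    have hsq : (ψ (g : ZMod p) - 1) * (ψ (g : ZMod p) + 1) = 0 := by linear_combination hord2
    rcases mul_eq_zero.mp hsq with h1 | h1
    · have hone : ψ (g : ZMod p) = 1 := by linear_combination h1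
      apply hne
      rw [hψdef] at *
      rw [MulChar.eq_one_iff]
      intro u
      obtain ⟨n, hn⟩ := hgpow u
      rw [← hn, Units.val_pow_eq_pow_val, map_pow, hone, one_pow]
    · have hneg : ψ (g : ZMod p) = -1 := by linear_combination h1
      obtain ⟨n, hn⟩ := hgpow (-1)
      have h1' : ((-1 : ℂ)) ^ n = 1 := by
        calc (-1 : ℂ) ^ n = (ψ (g : ZMod p)) ^ n := by rw [hneg]
          _ = ψ ((g : ZMod p) ^ n) := (map_pow _ _ _).symm
          _ = ψ (((g ^ n : (ZMod p)ˣ) : ZMod p)) := by rw [Units.val_pow_eq_pow_val]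
          _ = ψ (-1) := by rw [hn]; simp
          _ = 1 := hψ1
      have hneven : Even n := by
        rcases Nat.even_or_odd n with he | ho
        · exact he
        · exfalso; rw [ho.neg_one_pow] at h1'; norm_num at h1'
      have hsqr : IsSquare (-1 : ZMod p) := by
        obtain ⟨m, hm⟩ := hneven
        refine ⟨((g ^ m : (ZMod p)ˣ) : ZMod p), ?_⟩
        rw [← Units.val_mul, ← pow_add, ← hm, hn]; simp
      rw [ZMod.exists_sq_eq_neg_one_iff] at hsqr
      exact hsqr h4
  obtain ⟨u, hu⟩ := hex
  set t : ZMod p := (u : ZMod p) with htdef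
  have ht : t ≠ 0 := u.ne_zero
  have hnorm : ‖ψ t‖ = 1 :=
    Complex.norm_eq_one_of_pow_eq_one (hpow u) (by omega)
  have hconj : (starRingEnd ℂ) (ψ t) * ψ t = 1 := by
    rw [mul_comm, Complex.mul_conj]
    norm_cast
    rw [Complex.normSq_eq_norm_sq, hnorm]; norm_num
  -- convert sums over range p to sums over ZMod p
  have key : ∀ f : ZMod p → ℂ, ∑ i ∈ range p, f (i : ZMod p) = ∑ x : ZMod p, f x := by
    intro f
    refine Finset.sum_nbij' (fun i => (i : ZMod p)) (fun x => x.val) ?_ ?_ ?_ ?_ ?_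
    · intro a _; exact Finset.mem_univ _
    · intro x _; exact Finset.mem_range.mpr (ZMod.val_lt x)
    · intro a ha; exact ZMod.val_cast_of_lt (Finset.mem_range.mp ha)
    · intro x _; exact ZMod.natCast_zmod_val x
    · intro a _; rfl
  have scale : ∀ G : ZMod p → ℂ, ∑ x : ZMod p, G x = ∑ x : ZMod p, G (t * x) := by
    intro G
    exact (Fintype.sum_equiv (Equiv.mulLeft₀ t ht) (fun x => G (t * x)) G (fun x => rfl)).symm
  set c4 : ℂ := ((starRingEnd ℂ) (ψ t)) ^ 4 with hc4
  have hc4ne : c4 ≠ 1 := by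
    intro h
    apply hu
    have : (starRingEnd ℂ) ((ψ t) ^ 4) = (starRingEnd ℂ) 1 := by
      rw [map_pow, map_one]; exact h
    exact (starRingEnd ℂ).injective this
  have scale' : ∀ G : ZMod p → ℂ, ∑ x : ZMod p, G x = ∑ x : ZMod p, G (t * x) := scale
  set S : ℂ := ∑ a : ZMod p, ∑ b : ZMod p, ∑ c : ZMod p, ∑ d : ZMod p,
      (starRingEnd ℂ) (ψ (a ^ 5 + b ^ 5 - c ^ 5 - d ^ 5)) * ψ (a + b - c - d) with hS
  have quad : ∀ F : ZMod p → ZMod p → ZMod p → ZMod p → ℂ,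
      (∑ a ∈ range p, ∑ b ∈ range p, ∑ c ∈ range p, ∑ d ∈ range p,
        F (a : ZMod p) (b : ZMod p) (c : ZMod p) (d : ZMod p))
      = ∑ a : ZMod p, ∑ b : ZMod p, ∑ c : ZMod p, ∑ d : ZMod p, F a b c d := by
    intro F
    refine (key fun a => ∑ b ∈ range p, ∑ c ∈ range p, ∑ d ∈ range p,
      F a (b : ZMod p) (c : ZMod p) (d : ZMod p)).trans (Fintype.sum_congr _ _ fun a => ?_)
    refine (key fun b => ∑ c ∈ range p, ∑ d ∈ range p,
      F a b (c : ZMod p) (d : ZMod p)).trans (Fintype.sum_congr _ _ fun b => ?_)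
    refine (key fun c => ∑ d ∈ range p, F a b c (d : ZMod p)).trans
      (Fintype.sum_congr _ _ fun c => ?_)
    exact key fun d => F a b c d
  have hterm : ∀ a b c d : ZMod p,
      (starRingEnd ℂ) (ψ ((t * a) ^ 5 + (t * b) ^ 5 - (t * c) ^ 5 - (t * d) ^ 5)) *
        ψ (t * a + t * b - t * c - t * d)
      = c4 * ((starRingEnd ℂ) (ψ (a ^ 5 + b ^ 5 - c ^ 5 - d ^ 5)) * ψ (a + b - c - d)) := by
    intro a b c d
    have e1 : (t * a) ^ 5 + (t * b) ^ 5 - (t * c) ^ 5 - (t * d) ^ 5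
        = t ^ 5 * (a ^ 5 + b ^ 5 - c ^ 5 - d ^ 5) := by ring
    have e2 : t * a + t * b - t * c - t * d = t * (a + b - c - d) := by ring
    rw [e1, e2, map_mul ψ, map_mul ψ, map_pow ψ, map_mul (starRingEnd ℂ),
      map_pow (starRingEnd ℂ), hc4]
    linear_combination ((starRingEnd ℂ) (ψ t)) ^ 4 *
      (starRingEnd ℂ) (ψ (a ^ 5 + b ^ 5 - c ^ 5 - d ^ 5)) * ψ (a + b - c - d) * hconj
  have hkey : S = c4 * S := by
    conv_rhs => rw [hS]
    rw [hS]
    simp only [Finset.mul_sum]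
    refine (scale' fun a => ∑ b : ZMod p, ∑ c : ZMod p, ∑ d : ZMod p,
      (starRingEnd ℂ) (ψ (a ^ 5 + b ^ 5 - c ^ 5 - d ^ 5)) * ψ (a + b - c - d)).trans
      (Fintype.sum_congr _ _ fun a => ?_)
    refine (scale' fun b => ∑ c : ZMod p, ∑ d : ZMod p,
      (starRingEnd ℂ) (ψ ((t * a) ^ 5 + b ^ 5 - c ^ 5 - d ^ 5)) *
        ψ (t * a + b - c - d)).trans (Fintype.sum_congr _ _ fun b => ?_)
    refine (scale' fun c => ∑ d : ZMod p,
      (starRingEnd ℂ) (ψ ((t * a) ^ 5 + (t * b) ^ 5 - c ^ 5 - d ^ 5)) *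
        ψ (t * a + t * b - c - d)).trans (Fintype.sum_congr _ _ fun c => ?_)
    refine (scale' fun d =>
      (starRingEnd ℂ) (ψ ((t * a) ^ 5 + (t * b) ^ 5 - (t * c) ^ 5 - d ^ 5)) *
        ψ (t * a + t * b - t * c - d)).trans (Fintype.sum_congr _ _ fun d => ?_)
    exact hterm a b c d
  have hS0 : S = 0 := by
    have h0 : (1 - c4) * S = 0 := by linear_combination hkey
    rcases mul_eq_zero.mp h0 with h | h
    · exact absurd (by linear_combination -h) hc4ne
    · exact h
  exact (quad fun a b c d =>
    (starRingEnd ℂ) (ψ (a ^ 5 + b ^ 5 - c ^ 5 - d ^ 5)) * ψ (a + b - c - d)).trans hS0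
end
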